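/- Let ω ∈ ℝ^d satisfy the diophantine condition and set Θ := {n·ω : n ∈ ℤ^d} (which is a frequency set, and the map n ↦ n·ω is injective). Let w : Θ → [0,∞) be a weight such that for every N ≥ 0 there is C_N > 0 with w(n·ω) ≤ C_N ⟨n⟩^{−N} for all n ∈ ℤ^d. Then for every k ≥ 0 the sum ∑_{θ ∈ Θ^k} s_k(θ) is finite, where s_k is computed with the weight w. -/

import Mathlib

open scoped BigOperators

/-- The recursively defined quantities `s_k` associated to a weight `w`.
`sW w k θ` is `s_k(θ)` where `θ ∈ ℝ^k`. -/
noncomputable def sW (w : ℝ → ℝ) : (k : ℕ) → (Fin k → ℝ) → ℝ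
  | 0, _ => 1
  | 1, θ => if θ 0 = 0 then 0 else w (θ 0) / |θ 0|
  | (k+2), θ =>
    if (∑ i, θ i) = 0 then 0
    else |∑ i, θ i|⁻¹ *
      ∑ p : Equiv.Perm (Fin (k+2)), ∑ c : Composition (k+2),
        if h : ∀ i : Fin c.length, 2 * c.blocksFun i ≤ k + 2 then
          ∏ i : Fin c.length, sW w (c.blocksFun i) (fun j => θ (p (c.embedding i j)))
        else 0
termination_by k => k
decreasing_by
  have := h i; omega

lemma sW_nonneg (w : ℝ → ℝ) (hw : ∀ t, 0 ≤ w t) : ∀ (k : ℕ) (θ : Fin k → ℝ), 0 ≤ sW w k θ := by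
  intro k
  induction k using Nat.strong_induction_on with
  | _ k ih =>
    match k, ih with
    | 0, _ => intro θ; rw [sW]; norm_num
    | 1, _ =>
      intro θ; rw [sW]
      split
      · exact le_refl _
      · exact div_nonneg (hw _) (abs_nonneg _)
    | (k+2), ih =>
      intro θ; rw [sW]
      split
      · exact le_refl _
      · refine mul_nonneg (inv_nonneg.2 (abs_nonneg _)) ?_
        refine Finset.sum_nonneg fun p _ => Finset.sum_nonneg fun c _ => ?_
        split
        · rename_i h
          refine Finset.prod_nonneg fun i _ => ?_
          have h1 := c.one_le_blocksFun i
          have h2 := h i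
          exact ih (c.blocksFun i) (by omega) _
        · exact le_refl _

lemma one_add_sum_le_prod {ι : Type*} (s : Finset ι) (f : ι → ℝ) (hf : ∀ i ∈ s, 0 ≤ f i) :
    1 + ∑ i ∈ s, f i ≤ ∏ i ∈ s, (1 + f i) := by
  induction s using Finset.cons_induction with
  | empty => simp
  | cons a s ha ih =>
    rw [Finset.sum_cons, Finset.prod_cons]
    have h1 := ih (fun i hi => hf i (Finset.mem_cons_of_mem hi))
    have ha0 := hf a (Finset.mem_cons_self a s)
    have hs0 : 0 ≤ ∑ i ∈ s, f i :=
      Finset.sum_nonneg fun i hi => hf i (Finset.mem_cons_of_mem hi)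
    nlinarith

lemma summable_pi_prod {ι : Type*} (g : ι → ℝ) (hg0 : ∀ x, 0 ≤ g x) (hg : Summable g) :
    ∀ k : ℕ, Summable (fun n : Fin k → ι => ∏ i, g (n i)) := by
  intro k
  induction k with
  | zero =>
    refine (hasSum_single (f := fun n : Fin 0 → ι => ∏ i, g (n i)) default ?_).summable
    intro b hb
    exact absurd (Subsingleton.elim b default) hb
  | succ k ih =>
    have hA : (0 : ι → ℝ) ≤ g := fun x => hg0 x
    have hB : (0 : (Fin k → ι) → ℝ) ≤ fun n : Fin k → ι => ∏ i, g (n i) :=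
      fun n => Finset.prod_nonneg fun i _ => hg0 _
    have h2 : Summable (fun q : ι × (Fin k → ι) => g q.1 * ∏ i, g (q.2 i)) :=
      Summable.mul_of_nonneg (f := g) (g := fun n : Fin k → ι => ∏ i, g (n i)) hg ih hA hB
    have h3 : Summable ((fun n : Fin (k+1) → ι => ∏ i, g (n i)) ∘ (Fin.consEquiv (fun _ => ι))) := by
      refine h2.congr fun q => ?_
      show g q.1 * ∏ i : Fin k, g (q.2 i) = ∏ i : Fin (k+1), g (Fin.cons (α := fun _ => ι) q.1 q.2 i)
      rw [Fin.prod_univ_succ]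
      simp
    exact ((Fin.consEquiv (fun _ => ι)).summable_iff).1 h3

lemma summable_int_one_add_sq : Summable (fun a : ℤ => ((1:ℝ) + (a:ℝ)^2)⁻¹) := by
  have hnat : Summable (fun n : ℕ => ((1:ℝ) + (n:ℝ)^2)⁻¹) := by
    have h0 : Summable (fun n : ℕ => (1:ℝ) / ((n:ℝ)+1)^2) := by
      have := (summable_nat_add_iff (f := fun n : ℕ => 1/(n:ℝ)^2) 1).2
        (Real.summable_one_div_nat_pow.2 one_lt_two)
      refine this.congr fun n => ?_
      push_cast
      ring_nf
    refine Summable.of_nonneg_of_le (fun n => by positivity) (fun n => ?_) (h0.mul_left 2)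
    have hle : ((n:ℝ)+1)^2 ≤ 2*(1+(n:ℝ)^2) := by nlinarith [sq_nonneg ((n:ℝ) - 1)]
    calc ((1:ℝ)+(n:ℝ)^2)⁻¹ = 2 / (2*(1+(n:ℝ)^2)) := by
          field_simp
      _ ≤ 2 / ((n:ℝ)+1)^2 := by
          apply div_le_div_of_nonneg_left (by norm_num) (by positivity) hle
      _ = 2 * (1 / ((n:ℝ)+1)^2) := by rw [mul_one_div]
  refine Summable.of_nat_of_neg (hnat.congr fun n => by push_cast; ring_nf) ?_
  refine hnat.congr fun n => ?_
  push_cast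
  ring_nf

noncomputable def Gd (d : ℕ) (n : Fin d → ℤ) : ℝ := Real.sqrt (1 + ∑ j, ((n j : ℝ))^2)

lemma Gd_one_le (d : ℕ) (n : Fin d → ℤ) : 1 ≤ Gd d n := by
  rw [Gd, show (1:ℝ) = Real.sqrt 1 from (Real.sqrt_one).symm]
  apply Real.sqrt_le_sqrt
  have : 0 ≤ ∑ j, ((n j : ℝ))^2 := Finset.sum_nonneg fun j _ => sq_nonneg _
  rw [Real.sqrt_one]
  linarith

lemma Gd_pos (d : ℕ) (n : Fin d → ℤ) : 0 < Gd d n :=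
  lt_of_lt_of_le one_pos (Gd_one_le d n)

lemma sqrtsq_le_Gd (d : ℕ) (n : Fin d → ℤ) :
    Real.sqrt (∑ j, ((n j : ℝ))^2) ≤ Gd d n := by
  apply Real.sqrt_le_sqrt
  linarith

lemma Gd_sum_le (d k : ℕ) (n : Fin k → Fin d → ℤ) :
    Gd d (∑ i, n i) ≤ ∏ i, (2 * Gd d (n i)) := by
  classical
  let v : (Fin d → ℤ) →+ EuclideanSpace ℝ (Fin d) :=
    { toFun := fun m => WithLp.toLp 2 (fun j => (m j : ℝ))
      map_zero' := by ext j; simp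
      map_add' := by
        intro a b; ext j
        simp }
  have hnorm : ∀ m : Fin d → ℤ, ‖v m‖ = Real.sqrt (∑ j, ((m j : ℝ))^2) := by
    intro m
    rw [EuclideanSpace.norm_eq]
    congr 1
    refine Finset.sum_congr rfl fun j _ => ?_
    rw [Real.norm_eq_abs, sq_abs]
    rfl
  have hnsq : ∀ m : Fin d → ℤ, ∑ j, ((m j : ℝ))^2 = ‖v m‖^2 := by
    intro m
    rw [hnorm m, Real.sq_sqrt (Finset.sum_nonneg fun j _ => sq_nonneg _)]
  have step1 : ∀ m : Fin d → ℤ, Gd d m ≤ 1 + ‖v m‖ := by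
    intro m
    have h0 : (0:ℝ) ≤ ‖v m‖ := norm_nonneg _
    rw [Gd, hnsq m]
    have h1 : 1 + ‖v m‖^2 ≤ (1 + ‖v m‖)^2 := by nlinarith
    calc Real.sqrt (1 + ‖v m‖^2) ≤ Real.sqrt ((1 + ‖v m‖)^2) := Real.sqrt_le_sqrt h1
      _ = 1 + ‖v m‖ := Real.sqrt_sq (by linarith)
  calc Gd d (∑ i, n i) ≤ 1 + ‖v (∑ i, n i)‖ := step1 _
    _ = 1 + ‖∑ i, v (n i)‖ := by rw [map_sum]
    _ ≤ 1 + ∑ i, ‖v (n i)‖ := by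
        have := norm_sum_le (E := EuclideanSpace ℝ (Fin d)) Finset.univ (fun i => v (n i))
        linarith
    _ ≤ ∏ i, (1 + ‖v (n i)‖) := one_add_sum_le_prod _ _ (fun i _ => norm_nonneg _)
    _ ≤ ∏ i, (2 * Gd d (n i)) := by
        refine Finset.prod_le_prod (fun i _ => by positivity) (fun i _ => ?_)
        have h1 := Gd_one_le d (n i)
        have h2 : ‖v (n i)‖ ≤ Gd d (n i) := by rw [hnorm]; exact sqrtsq_le_Gd d (n i)
        linarith

lemma Ld_sum (d k : ℕ) (ω : Fin d → ℝ) (n : Fin k → Fin d → ℤ) :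
    ∑ i, ∑ j, ((n i j : ℝ)) * ω j = ∑ j, (((∑ i, n i) j : ℤ) : ℝ) * ω j := by
  rw [Finset.sum_comm]
  refine Finset.sum_congr rfl fun j _ => ?_
  rw [Finset.sum_apply]
  push_cast
  rw [Finset.sum_mul]

lemma abs_inv_le (d : ℕ) (ω : Fin d → ℝ) (c μ : ℝ) (hc : 0 < c) (hμ : 0 < μ)
    (hdio : ∀ n : Fin d → ℤ, n ≠ 0 →
      c * (Real.sqrt (∑ i, ((n i : ℝ)) ^ 2)) ^ (-μ) < |∑ i, (n i : ℝ) * ω i|)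
    (m : Fin d → ℤ) (hm : (∑ j, ((m j : ℝ)) * ω j) ≠ 0) :
    |∑ j, ((m j : ℝ)) * ω j|⁻¹ ≤ c⁻¹ * Gd d m ^ μ := by
  have hm0 : m ≠ 0 := by
    rintro rfl
    apply hm
    simp
  have h := hdio m hm0
  have hr1 : (1:ℝ) ≤ Real.sqrt (∑ j, ((m j : ℝ))^2) := by
    obtain ⟨j, hj⟩ : ∃ j, m j ≠ 0 := by
      by_contra hcon
      push_neg at hcon
      exact hm0 (funext hcon)
    have h1 : (1:ℝ) ≤ ((m j : ℝ))^2 := by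
      have h2 : (1:ℤ) ≤ |m j| := Int.one_le_abs (by omega)
      have h3 : (1:ℝ) ≤ |(m j : ℝ)| := by
        rw [← Int.cast_abs]
        exact_mod_cast h2
      nlinarith [abs_nonneg ((m j : ℝ)), sq_abs ((m j : ℝ)), h3]
    have h4 : (1:ℝ) ≤ ∑ j, ((m j : ℝ))^2 :=
      h1.trans (Finset.single_le_sum (fun i _ => sq_nonneg ((m i : ℝ))) (Finset.mem_univ j))
    rw [show (1:ℝ) = Real.sqrt 1 from (Real.sqrt_one).symm]
    exact Real.sqrt_le_sqrt h4
  set r := Real.sqrt (∑ j, ((m j : ℝ))^2) with hr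
  have hrpos : 0 < r := lt_of_lt_of_le one_pos hr1
  have hcr : 0 < c * r ^ (-μ) := mul_pos hc (Real.rpow_pos_of_pos hrpos _)
  have h2 : |∑ j, ((m j : ℝ)) * ω j|⁻¹ ≤ (c * r ^ (-μ))⁻¹ := by
    apply inv_anti₀ hcr h.le
  rw [mul_inv, ← Real.rpow_neg hrpos.le, neg_neg] at h2
  refine h2.trans ?_
  apply mul_le_mul_of_nonneg_left ?_ (inv_nonneg.2 hc.le)
  exact Real.rpow_le_rpow hrpos.le (sqrtsq_le_Gd d m) hμ.le

lemma sW_bound (d : ℕ) (ω : Fin d → ℝ) (c μ : ℝ) (hc : 0 < c) (hμ : 0 < μ)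
    (hdio : ∀ n : Fin d → ℤ, n ≠ 0 →
      c * (Real.sqrt (∑ i, ((n i : ℝ)) ^ 2)) ^ (-μ) < |∑ i, (n i : ℝ) * ω i|)
    (w : ℝ → ℝ) (hw : ∀ t, 0 ≤ w t)
    (hdecay : ∀ N : ℕ, ∃ C : ℝ, 0 < C ∧ ∀ n : Fin d → ℤ,
      w (∑ j, (n j : ℝ) * ω j) ≤ C * Gd d n ^ (-(N : ℝ))) :
    ∀ k M : ℕ, ∃ C : ℝ, 0 < C ∧ ∀ n : Fin k → Fin d → ℤ,
      sW w k (fun i => ∑ j, (n i j : ℝ) * ω j) ≤ C * ∏ i, Gd d (n i) ^ (-(M : ℝ)) := by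
  intro k
  induction k using Nat.strong_induction_on with
  | _ k ih =>
    match k, ih with
    | 0, _ =>
      intro M
      refine ⟨1, one_pos, fun n => ?_⟩
      rw [sW]
      simp
    | 1, _ =>
      intro M
      obtain ⟨C₀, hC₀, hdec⟩ := hdecay (M + Nat.ceil μ + 1)
      refine ⟨C₀ * c⁻¹, by positivity, fun n => ?_⟩
      rw [sW, Fin.prod_univ_one]
      have hG1 := Gd_one_le d (n 0)
      have hGpos := Gd_pos d (n 0)
      have hGM : (0:ℝ) ≤ Gd d (n 0) ^ (-(M:ℝ)) := Real.rpow_nonneg hGpos.le _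
      split_ifs with hne
      · positivity
      · have hne' : (∑ j, ((n 0 j : ℝ)) * ω j) ≠ 0 := hne
        have h1 := hdec (n 0)
        have h2 : |∑ j, ((n 0 j : ℝ)) * ω j|⁻¹ ≤ c⁻¹ * Gd d (n 0) ^ μ :=
          abs_inv_le d ω c μ hc hμ hdio (n 0) hne'
        have hrw : (w (∑ j, ((n 0 j : ℝ)) * ω j)) / |∑ j, ((n 0 j : ℝ)) * ω j|
            = w (∑ j, ((n 0 j : ℝ)) * ω j) * |∑ j, ((n 0 j : ℝ)) * ω j|⁻¹ :=
          div_eq_mul_inv _ _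
      
        calc (w (∑ j, ((n 0 j : ℝ)) * ω j)) / |∑ j, ((n 0 j : ℝ)) * ω j|
            = w (∑ j, ((n 0 j : ℝ)) * ω j) * |∑ j, ((n 0 j : ℝ)) * ω j|⁻¹ := hrw
          _ ≤ (C₀ * Gd d (n 0) ^ (-((M + Nat.ceil μ + 1 : ℕ) : ℝ))) * (c⁻¹ * Gd d (n 0) ^ μ) := by
              apply mul_le_mul h1 h2 (inv_nonneg.2 (abs_nonneg _))
              have := Real.rpow_nonneg hGpos.le (-((M + Nat.ceil μ + 1 : ℕ) : ℝ))
              positivity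
          _ = (C₀ * c⁻¹) * (Gd d (n 0) ^ (-((M + Nat.ceil μ + 1 : ℕ) : ℝ)) * Gd d (n 0) ^ μ) := by
              ring
          _ = (C₀ * c⁻¹) * Gd d (n 0) ^ (-((M + Nat.ceil μ + 1 : ℕ) : ℝ) + μ) := by
              rw [← Real.rpow_add hGpos]
          _ ≤ (C₀ * c⁻¹) * Gd d (n 0) ^ (-(M:ℝ)) := by
              apply mul_le_mul_of_nonneg_left ?_ (by positivity)
              apply Real.rpow_le_rpow_of_exponent_le hG1
              have hceil := Nat.le_ceil μ
              push_cast
              linarith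
    | (k+2), ih =>
      intro M
      -- constants from the inductive hypothesis at exponent M'
      have hex : ∀ b : ℕ, ∃ C : ℝ, 0 < C ∧ ∀ (_ : b < k+2) (n : Fin b → Fin d → ℤ),
          sW w b (fun i => ∑ j, (n i j : ℝ) * ω j)
            ≤ C * ∏ i, Gd d (n i) ^ (-((M + Nat.ceil μ + 1 : ℕ) : ℝ)) := by
        intro b
        by_cases hb : b < k+2
        · obtain ⟨C, hC, h⟩ := ih b hb (M + Nat.ceil μ + 1)
          exact ⟨C, hC, fun _ n => h n⟩
        · exact ⟨1, one_pos, fun hb' => absurd hb' hb⟩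
      choose Cf hCfpos hCf using hex
      set D : ℝ := ∑ b ∈ Finset.range (k+2), (1 + Cf b) with hD
      have hD1 : (1:ℝ) ≤ D := by
        have h1 : ∀ b ∈ Finset.range (k+2), (1:ℝ) ≤ 1 + Cf b :=
          fun b _ => by linarith [hCfpos b]
        have h2 := Finset.card_nsmul_le_sum (Finset.range (k+2)) (fun b => 1 + Cf b) 1 h1
        simp only [Finset.card_range, nsmul_eq_mul, mul_one] at h2
        rw [← hD] at h2
        have : (1:ℝ) ≤ ((k+2 : ℕ) : ℝ) := by exact_mod_cast Nat.one_le_iff_ne_zero.2 (by omega)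
        linarith
      have hDpos : (0:ℝ) < D := lt_of_lt_of_le one_pos hD1
      have hDb : ∀ b : ℕ, b < k+2 → Cf b ≤ D := by
        intro b hb
        have h1 : Cf b ≤ 1 + Cf b := by linarith
        refine h1.trans ?_
        refine Finset.single_le_sum (f := fun b => 1 + Cf b) (fun i _ => ?_)
          (Finset.mem_range.2 hb)
        show (0:ℝ) ≤ 1 + Cf i
        linarith [hCfpos i]
      have hCompNe : Nonempty (Composition (k+2)) := ⟨Composition.ones (k+2)⟩
      set A : ℝ := (Fintype.card (Equiv.Perm (Fin (k+2))) : ℝ) *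
        (Fintype.card (Composition (k+2)) : ℝ) with hA
      have hApos : (0:ℝ) < A := by
        have h1 : 0 < Fintype.card (Equiv.Perm (Fin (k+2))) := Fintype.card_pos
        have h2 : 0 < Fintype.card (Composition (k+2)) := Fintype.card_pos
        rw [hA]
        positivity
      refine ⟨(c⁻¹ * ((2:ℝ)^μ)^(k+2)) * (A * D^(k+2)), by positivity, fun n => ?_⟩
      have hGposn : ∀ i, (0:ℝ) < Gd d (n i) := fun i => Gd_pos d (n i)
      have hProdM : (0:ℝ) ≤ ∏ i, Gd d (n i) ^ (-(M:ℝ)) :=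
        Finset.prod_nonneg fun i _ => Real.rpow_nonneg (hGposn i).le _
      rw [sW]
      split_ifs with hS
      · positivity
      · -- main case
        have hLd := Ld_sum d (k+2) ω n
        have hm : (∑ j, (((∑ i, n i) j : ℤ) : ℝ) * ω j) ≠ 0 := by
          rw [← hLd]; exact hS
        have hinv : |∑ i, (fun i => ∑ j, (n i j : ℝ) * ω j) i|⁻¹
            ≤ c⁻¹ * Gd d (∑ i, n i) ^ μ := by
          show |∑ i, ∑ j, ((n i j : ℝ)) * ω j|⁻¹ ≤ _
          rw [hLd]
          exact abs_inv_le d ω c μ hc hμ hdio _ hm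
        have hGsum : Gd d (∑ i, n i) ^ μ ≤ ((2:ℝ)^μ)^(k+2) * ∏ i, Gd d (n i) ^ μ := by
          have h1 : Gd d (∑ i, n i) ≤ ∏ i, (2 * Gd d (n i)) := Gd_sum_le d (k+2) n
          have h2 := Real.rpow_le_rpow (Gd_pos d _).le h1 hμ.le
          refine h2.trans_eq ?_
          rw [← Real.finset_prod_rpow _ _ (fun i _ => mul_nonneg (by norm_num) (hGposn i).le) μ]
          rw [Finset.prod_congr rfl (fun i (_ : i ∈ Finset.univ) =>
            Real.mul_rpow (by norm_num) (hGposn i).le)]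
          rw [Finset.prod_mul_distrib, Finset.prod_const]
          simp
        have hprodM'0 : (0:ℝ) ≤ ∏ l, Gd d (n l) ^ (-((M + Nat.ceil μ + 1 : ℕ) : ℝ)) :=
          Finset.prod_nonneg fun l _ => Real.rpow_nonneg (hGposn l).le _
        have hterm : ∀ (p : Equiv.Perm (Fin (k+2))) (c' : Composition (k+2)),
            (if _ : ∀ i : Fin c'.length, 2 * c'.blocksFun i ≤ k + 2 then
              ∏ i : Fin c'.length, sW w (c'.blocksFun i)
                (fun j => (fun i => ∑ j, (n i j : ℝ) * ω j) (p (c'.embedding i j)))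
            else 0)
            ≤ D^(k+2) * ∏ l, Gd d (n l) ^ (-((M + Nat.ceil μ + 1 : ℕ) : ℝ)) := by
          intro p c'
          have hrhs0 : (0:ℝ) ≤ D^(k+2) *
              ∏ l, Gd d (n l) ^ (-((M + Nat.ceil μ + 1 : ℕ) : ℝ)) :=
            mul_nonneg (pow_nonneg hDpos.le _) hprodM'0
          split_ifs with hcc
          · have hb : ∀ i : Fin c'.length, c'.blocksFun i < k+2 := fun i => by
              have h1 := hcc i; have h2 := c'.one_le_blocksFun i; omega
            have hX0 : ∀ i : Fin c'.length,
                (0:ℝ) ≤ ∏ j, Gd d (n (p (c'.embedding i j)))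
                  ^ (-((M + Nat.ceil μ + 1 : ℕ) : ℝ)) :=
              fun i => Finset.prod_nonneg fun j _ => Real.rpow_nonneg (Gd_pos _ _).le _
            calc ∏ i : Fin c'.length, sW w (c'.blocksFun i)
                  (fun j => (fun i => ∑ j, (n i j : ℝ) * ω j) (p (c'.embedding i j)))
                ≤ ∏ i : Fin c'.length, (Cf (c'.blocksFun i) *
                    ∏ j, Gd d (n (p (c'.embedding i j)))
                      ^ (-((M + Nat.ceil μ + 1 : ℕ) : ℝ))) := by
                  refine Finset.prod_le_prod (fun i _ => sW_nonneg w hw _ _) (fun i _ => ?_)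
                  exact hCf (c'.blocksFun i) (hb i) (fun j => n (p (c'.embedding i j)))
              _ ≤ ∏ i : Fin c'.length, (D *
                    ∏ j, Gd d (n (p (c'.embedding i j)))
                      ^ (-((M + Nat.ceil μ + 1 : ℕ) : ℝ))) := by
                  refine Finset.prod_le_prod (fun i _ => ?_) (fun i _ => ?_)
                  · exact mul_nonneg (hCfpos _).le (hX0 i)
                  · exact mul_le_mul_of_nonneg_right (hDb _ (hb i)) (hX0 i)
              _ = D^(c'.length) * ∏ i : Fin c'.length,
                    ∏ j, Gd d (n (p (c'.embedding i j)))
                      ^ (-((M + Nat.ceil μ + 1 : ℕ) : ℝ)) := by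
                  rw [Finset.prod_mul_distrib, Finset.prod_const, Finset.card_univ,
                    Fintype.card_fin]
              _ ≤ D^(k+2) * ∏ i : Fin c'.length,
                    ∏ j, Gd d (n (p (c'.embedding i j)))
                      ^ (-((M + Nat.ceil μ + 1 : ℕ) : ℝ)) := by
                  apply mul_le_mul_of_nonneg_right
                    (pow_le_pow_right₀ hD1 c'.length_le)
                  exact Finset.prod_nonneg fun i _ => hX0 i
              _ = D^(k+2) * ∏ l, Gd d (n l)
                      ^ (-((M + Nat.ceil μ + 1 : ℕ) : ℝ)) := by
                  congr 1
                  have e1 : ∏ σ : (Σ i : Fin c'.length, Fin (c'.blocksFun i)),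
                      Gd d (n (p (c'.blocksFinEquiv σ))) ^ (-((M + Nat.ceil μ + 1 : ℕ) : ℝ))
                      = ∏ l : Fin (k+2), Gd d (n (p l))
                          ^ (-((M + Nat.ceil μ + 1 : ℕ) : ℝ)) :=
                    Equiv.prod_comp c'.blocksFinEquiv
                      (fun l => Gd d (n (p l)) ^ (-((M + Nat.ceil μ + 1 : ℕ) : ℝ)))
                  have e2 : ∏ l : Fin (k+2), Gd d (n (p l))
                        ^ (-((M + Nat.ceil μ + 1 : ℕ) : ℝ))
                      = ∏ l : Fin (k+2), Gd d (n l)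
                          ^ (-((M + Nat.ceil μ + 1 : ℕ) : ℝ)) :=
                    Equiv.prod_comp p (fun l => Gd d (n l) ^ (-((M + Nat.ceil μ + 1 : ℕ) : ℝ)))
                  rw [← e2, ← e1]
                  rw [← Finset.univ_sigma_univ, Finset.prod_sigma]
                  rfl
          · exact hrhs0
        have hsum : (∑ p : Equiv.Perm (Fin (k+2)), ∑ c' : Composition (k+2),
              (if _ : ∀ i : Fin c'.length, 2 * c'.blocksFun i ≤ k + 2 then
                ∏ i : Fin c'.length, sW w (c'.blocksFun i)
                  (fun j => (fun i => ∑ j, (n i j : ℝ) * ω j) (p (c'.embedding i j)))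
              else 0))
            ≤ A * (D^(k+2) * ∏ l, Gd d (n l) ^ (-((M + Nat.ceil μ + 1 : ℕ) : ℝ))) := by
          calc _ ≤ ∑ _p : Equiv.Perm (Fin (k+2)), ∑ _c' : Composition (k+2),
                (D^(k+2) * ∏ l, Gd d (n l) ^ (-((M + Nat.ceil μ + 1 : ℕ) : ℝ))) :=
              Finset.sum_le_sum fun p _ => Finset.sum_le_sum fun c' _ => hterm p c'
            _ = A * (D^(k+2) * ∏ l, Gd d (n l) ^ (-((M + Nat.ceil μ + 1 : ℕ) : ℝ))) := by
              rw [Finset.sum_const, Finset.sum_const, Finset.card_univ, Finset.card_univ,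
                hA, nsmul_eq_mul, nsmul_eq_mul]
              ring
        have hsum0 : (0:ℝ) ≤ ∑ p : Equiv.Perm (Fin (k+2)), ∑ c' : Composition (k+2),
              (if _ : ∀ i : Fin c'.length, 2 * c'.blocksFun i ≤ k + 2 then
                ∏ i : Fin c'.length, sW w (c'.blocksFun i)
                  (fun j => (fun i => ∑ j, (n i j : ℝ) * ω j) (p (c'.embedding i j)))
              else 0) := by
          refine Finset.sum_nonneg fun p _ => Finset.sum_nonneg fun c' _ => ?_
          split_ifs
          · exact Finset.prod_nonneg fun i _ => sW_nonneg w hw _ _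
          · exact le_refl _
        calc |∑ i, (fun i => ∑ j, (n i j : ℝ) * ω j) i|⁻¹ *
              ∑ p : Equiv.Perm (Fin (k+2)), ∑ c' : Composition (k+2),
                (if _ : ∀ i : Fin c'.length, 2 * c'.blocksFun i ≤ k + 2 then
                  ∏ i : Fin c'.length, sW w (c'.blocksFun i)
                    (fun j => (fun i => ∑ j, (n i j : ℝ) * ω j) (p (c'.embedding i j)))
                else 0)
            ≤ (c⁻¹ * Gd d (∑ i, n i) ^ μ) *
              (A * (D^(k+2) * ∏ l, Gd d (n l) ^ (-((M + Nat.ceil μ + 1 : ℕ) : ℝ)))) := by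
              apply mul_le_mul hinv hsum hsum0
              have := Real.rpow_nonneg (Gd_pos d (∑ i, n i)).le μ
              positivity
          _ ≤ (c⁻¹ * (((2:ℝ)^μ)^(k+2) * ∏ i, Gd d (n i) ^ μ)) *
              (A * (D^(k+2) * ∏ l, Gd d (n l) ^ (-((M + Nat.ceil μ + 1 : ℕ) : ℝ)))) := by
              apply mul_le_mul_of_nonneg_right ?_ (by positivity)
              exact mul_le_mul_of_nonneg_left hGsum (inv_nonneg.2 hc.le)
          _ = ((c⁻¹ * ((2:ℝ)^μ)^(k+2)) * (A * D^(k+2))) *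
              ((∏ i, Gd d (n i) ^ μ) *
                ∏ l, Gd d (n l) ^ (-((M + Nat.ceil μ + 1 : ℕ) : ℝ))) := by ring
          _ = ((c⁻¹ * ((2:ℝ)^μ)^(k+2)) * (A * D^(k+2))) *
              ∏ i, (Gd d (n i) ^ μ * Gd d (n i) ^ (-((M + Nat.ceil μ + 1 : ℕ) : ℝ))) := by
              rw [← Finset.prod_mul_distrib]
          _ = ((c⁻¹ * ((2:ℝ)^μ)^(k+2)) * (A * D^(k+2))) *
              ∏ i, Gd d (n i) ^ (μ + -((M + Nat.ceil μ + 1 : ℕ) : ℝ)) := by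
              congr 1
              exact Finset.prod_congr rfl fun i _ => (Real.rpow_add (hGposn i) _ _).symm
          _ ≤ ((c⁻¹ * ((2:ℝ)^μ)^(k+2)) * (A * D^(k+2))) *
              ∏ i, Gd d (n i) ^ (-(M:ℝ)) := by
              apply mul_le_mul_of_nonneg_left ?_ (by positivity)
              refine Finset.prod_le_prod (fun i _ => Real.rpow_nonneg (hGposn i).le _)
                (fun i _ => ?_)
              apply Real.rpow_le_rpow_of_exponent_le (Gd_one_le d (n i))
              have hceil := Nat.le_ceil μ
              push_cast
              linarith

theorem stmt6 (d : ℕ) (ω : Fin d → ℝ)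
    (hdio : ∃ c : ℝ, 0 < c ∧ ∃ μ : ℝ, 0 < μ ∧ ∀ n : Fin d → ℤ, n ≠ 0 →
      c * (Real.sqrt (∑ i, ((n i : ℝ)) ^ 2)) ^ (-μ) < |∑ i, (n i : ℝ) * ω i|)
    (w : ℝ → ℝ) (hw : ∀ t, 0 ≤ w t)
    (hdecay : ∀ N : ℕ, ∃ C : ℝ, 0 < C ∧ ∀ n : Fin d → ℤ,
      w (∑ j, (n j : ℝ) * ω j) ≤ C * (Real.sqrt (1 + ∑ j, ((n j : ℝ)) ^ 2)) ^ (-(N : ℝ))) :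
    Function.Injective (fun n : Fin d → ℤ => ∑ j, (n j : ℝ) * ω j) ∧
    ∀ k : ℕ, Summable (fun n : Fin k → Fin d → ℤ =>
      sW w k (fun i => ∑ j, (n i j : ℝ) * ω j)) := by
  obtain ⟨c, hc, μ, hμ, hdio⟩ := hdio
  have hdecay' : ∀ N : ℕ, ∃ C : ℝ, 0 < C ∧ ∀ n : Fin d → ℤ,
      w (∑ j, (n j : ℝ) * ω j) ≤ C * Gd d n ^ (-(N : ℝ)) := hdecay
  constructor
  · intro a b hab
    by_contra hne
    have h0 : a - b ≠ 0 := sub_ne_zero.mpr hne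
    have h := hdio (a - b) h0
    have hab' : ∑ j, (a j : ℝ) * ω j = ∑ j, (b j : ℝ) * ω j := hab
    have hL : ∑ i, ((a - b) i : ℝ) * ω i = 0 := by
      calc ∑ i, ((a - b) i : ℝ) * ω i
          = ∑ i, ((a i : ℝ) * ω i - (b i : ℝ) * ω i) := by
            refine Finset.sum_congr rfl fun i _ => ?_
            rw [Pi.sub_apply]
            push_cast
            ring
        _ = 0 := by rw [Finset.sum_sub_distrib, hab']; ring
    rw [hL] at h
    simp only [abs_zero] at h
    have hnn : (0:ℝ) ≤ c * (Real.sqrt (∑ i, (((a - b) i : ℝ))^2)) ^ (-μ) :=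
      mul_nonneg hc.le (Real.rpow_nonneg (Real.sqrt_nonneg _) _)
    linarith
  · intro k
    obtain ⟨C, hC, hbound⟩ := sW_bound d ω c μ hc hμ hdio w hw hdecay' k (2*d)
    have hg0 : ∀ m : Fin d → ℤ, (0:ℝ) ≤ Gd d m ^ (-((2*d : ℕ) : ℝ)) :=
      fun m => Real.rpow_nonneg (Gd_pos d m).le _
    have hg : Summable (fun m : Fin d → ℤ => Gd d m ^ (-((2*d : ℕ) : ℝ))) := by
      have hpi := summable_pi_prod (fun a : ℤ => ((1:ℝ) + (a:ℝ)^2)⁻¹)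
        (fun a => by positivity) summable_int_one_add_sq d
      refine Summable.of_nonneg_of_le (fun m => hg0 m) (fun m => ?_) hpi
      have hS0 : (0:ℝ) ≤ ∑ j, ((m j : ℝ))^2 := Finset.sum_nonneg fun j _ => sq_nonneg _
      have hE : Gd d m ^ (-((2*d : ℕ) : ℝ)) = ((1 + ∑ j, ((m j : ℝ))^2)^d)⁻¹ := by
        rw [Real.rpow_neg (Gd_pos d m).le, Real.rpow_natCast]
        congr 1
        rw [Gd, pow_mul, Real.sq_sqrt (by linarith)]
      rw [hE]
      have h1 : ∏ j, ((1:ℝ) + ((m j : ℝ))^2) ≤ (1 + ∑ j, ((m j : ℝ))^2)^d := by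
        calc ∏ j, ((1:ℝ) + ((m j : ℝ))^2)
            ≤ ∏ _j : Fin d, (1 + ∑ j', ((m j' : ℝ))^2) := by
              refine Finset.prod_le_prod (fun j _ => by positivity) (fun j _ => ?_)
              have := Finset.single_le_sum
                (fun i (_ : i ∈ Finset.univ) => sq_nonneg ((m i : ℝ))) (Finset.mem_univ j)
              linarith
          _ = (1 + ∑ j, ((m j : ℝ))^2)^d := by
              rw [Finset.prod_const, Finset.card_univ, Fintype.card_fin]
      have h2 : (0:ℝ) < ∏ j, ((1:ℝ) + ((m j : ℝ))^2) :=
        Finset.prod_pos fun j _ => by positivity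
      calc ((1 + ∑ j, ((m j : ℝ))^2)^d)⁻¹
          ≤ (∏ j, ((1:ℝ) + ((m j : ℝ))^2))⁻¹ := inv_anti₀ h2 h1
        _ = ∏ j, ((1:ℝ) + ((m j : ℝ))^2)⁻¹ := by rw [Finset.prod_inv_distrib]
    have hpik := summable_pi_prod (fun m : Fin d → ℤ => Gd d m ^ (-((2*d : ℕ) : ℝ))) hg0 hg k
    exact Summable.of_nonneg_of_le (fun n => sW_nonneg w hw k _)
      (fun n => hbound n) (hpik.mul_left C)
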